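/- Let T be a time series of length n (a function from {0,…,n−1} to ℝ), let d ≥ 1 be a dilation rate and l ≥ 1 a window length. Let T′ be the reordered time series obtained by concatenating the down-sampled series of T at offsets 0, 1, …, d−1 (each down-sampled series at offset r lists T(r), T(r+d), T(r+2d), … for all indices r+k·d < n). Then every dilated window of T of length l with dilation d is a sliding window of T′ of length l: for every offset i with i + (l−1)·d < n there exists a position j with j + l ≤ n such that for all k < l, T′(j+k) = T(i + k·d). -/

import Mathlib

lemma hermite (d : ℕ) (hd : 0 < d) : ∀ n : ℕ, ∑ r ∈ Finset.range d, (n + r) / d = n := by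
  intro n
  induction n with
  | zero =>
    apply Finset.sum_eq_zero
    intro r hr
    simp at hr
    simp [Nat.div_eq_of_lt hr]
  | succ n ih =>
    have step : ∑ r ∈ Finset.range d, (n + 1 + r) / d
        = ∑ r ∈ Finset.range d, (n + (r + 1)) / d := by
      apply Finset.sum_congr rfl; intro r _; congr 1; omega
    rw [step]
    have h := Finset.sum_range_succ (fun r => (n + r)/d) d
    have h' := Finset.sum_range_succ' (fun r => (n + r)/d) d
    have hdd : (n + d) / d = n / d + 1 := Nat.add_div_right n hd
    have := h'.symm.trans h
    simp only [Nat.add_zero] at this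
    omega

lemma flatten_getElem? {α} : ∀ (L : List (List α)) (r q : ℕ) (hr : r < L.length),
    q < (L[r]'hr).length →
    L.flatten[((L.take r).map List.length).sum + q]? = (L[r]'hr)[q]? := by
  intro L
  induction L with
  | nil => intro r q hr; simp at hr
  | cons a L ih =>
    intro r q hr hq
    cases r with
    | zero =>
      simp only [List.take_zero, List.map_nil, List.sum_nil, Nat.zero_add, List.flatten_cons]
      simp only [List.getElem_cons_zero] at hq ⊢
      rw [List.getElem?_append_left hq]
    | succ r =>
      simp only [List.take_succ_cons, List.map_cons, List.sum_cons, List.flatten_cons]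
      simp only [List.getElem_cons_succ] at hq ⊢
      rw [Nat.add_assoc, List.getElem?_append_right (by omega)]
      simpa using ih r q (by simpa using hr) hq

/-- The down-sampled series of a time series `T` (of length `n`) by rate `d` at offset `r`:
the finite sequence whose `k`-th entry is `T (r + k * d)`, with one entry for each
natural number `k` with `r + k * d < n`. -/
noncomputable def downSample (T : ℕ → ℝ) (n d r : ℕ) : List ℝ :=
  (List.range (Nat.card {k : ℕ | r + k * d < n})).map (fun k => T (r + k * d))

/-- The reordered time series `T′`: the concatenation, for `r = 0, 1, …, d-1` in order,
of the down-sampled series of `T` by rate `d` at offset `r`. -/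
noncomputable def reorder (T : ℕ → ℝ) (n d : ℕ) : List ℝ :=
  ((List.range d).map (fun r => downSample T n d r)).flatten

lemma card_lemma (n d r : ℕ) (hd : 1 ≤ d) :
    Nat.card {k : ℕ | r + k * d < n} = (n + d - 1 - r) / d := by
  have hiff : ∀ k : ℕ, r + k * d < n ↔ k < (n + d - 1 - r) / d := by
    intro k
    have hmul : (k + 1) * d = k * d + d := by ring
    rw [show (k < (n + d - 1 - r) / d) ↔ (k + 1 ≤ (n + d - 1 - r) / d) from Iff.rfl,
      Nat.le_div_iff_mul_le hd, hmul]
    omega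
  have hset : {k : ℕ | r + k * d < n} = Set.Iio ((n + d - 1 - r) / d) := by
    ext k; exact hiff k
  rw [hset, Nat.card_eq_fintype_card]
  simp

/-- Every dilated window of `T` of length `l` with dilation `d` is a sliding window of the
reordered series `T′`: for every offset `i` with `i + (l-1)·d < n` there is a position `j`
with `j + l ≤ n` such that for all `k < l`, `T′(j + k) = T (i + k·d)`. -/
theorem dilated_window_is_sliding_window_of_reorder
    (T : ℕ → ℝ) (n d l : ℕ) (hd : 1 ≤ d) (hl : 1 ≤ l)
    (i : ℕ) (hi : i + (l - 1) * d < n) :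
    ∃ j, j + l ≤ n ∧ ∀ k < l, (reorder T n d)[j + k]? = some (T (i + k * d)) := by
  obtain ⟨r, q, hrd, hiq⟩ : ∃ r q, r < d ∧ r + q * d = i :=
    ⟨i % d, i / d, Nat.mod_lt i hd, by rw [Nat.mul_comm]; exact Nat.mod_add_div i d⟩
  -- the window fits in the down-sampled series at offset r
  have hql : q + l ≤ (n + d - 1 - r) / d := by
    have h1 : (q + (l - 1)) * d = q * d + (l - 1) * d := by ring
    have h2 : (q + (l - 1) + 1) * d = (q + (l - 1)) * d + d := by ring
    have h3 : (q + (l - 1) + 1) * d ≤ n + d - 1 - r := by omega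
    have h4 := (Nat.le_div_iff_mul_le hd).mpr h3
    omega
  -- total length of the reordered series is n
  have hsum : ∑ r' ∈ Finset.range d, (n + d - 1 - r') / d = n := by
    have e1 : ∑ r' ∈ Finset.range d, (n + d - 1 - r') / d
        = ∑ r' ∈ Finset.range d, (n + (d - 1 - r')) / d := by
      apply Finset.sum_congr rfl
      intro x hx
      simp only [Finset.mem_range] at hx
      congr 1
      omega
    rw [e1, Finset.sum_range_reflect (fun r' => (n + r') / d) d, hermite d hd n]
  refine ⟨(∑ r' ∈ Finset.range r, (n + d - 1 - r') / d) + q, ?_, ?_⟩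
  · have hsplit := Finset.sum_range_add_sum_Ico (fun r' => (n + d - 1 - r') / d)
      (le_of_lt hrd)
    have hcr : (n + d - 1 - r) / d ≤ ∑ r' ∈ Finset.Ico r d, (n + d - 1 - r') / d := by
      apply Finset.single_le_sum (f := fun r' => (n + d - 1 - r') / d)
        (fun _ _ => Nat.zero_le _)
      simp [Finset.mem_Ico, hrd]
    omega
  · intro k hk
    set L := (List.range d).map (fun r' => downSample T n d r') with hL
    have hrL : r < L.length := by simp [hL, hrd]
    have hLr : L[r]'hrL = downSample T n d r := by simp [hL]
    have hdsl : ∀ r', (downSample T n d r').length = (n + d - 1 - r') / d := by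
      intro r'
      rw [downSample, List.length_map, List.length_range, card_lemma n d r' hd]
    have hqk : q + k < (L[r]'hrL).length := by
      rw [hLr, hdsl]; omega
    have hprefix : ((L.take r).map List.length).sum
        = ∑ r' ∈ Finset.range r, (n + d - 1 - r') / d := by
      rw [hL, ← List.map_take, List.take_range, Nat.min_eq_left (le_of_lt hrd),
        List.map_map]
      have hfl : ((List.range r).map
          (fun r' => (downSample T n d r').length)).sum
          = ∑ x ∈ Finset.range r, (downSample T n d x).length := rfl
      rw [show (List.length ∘ fun r' => downSample T n d r')
          = fun r' => (downSample T n d r').length from rfl, hfl]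
      exact Finset.sum_congr rfl fun x _ => hdsl x
    have hflat := flatten_getElem? L r (q + k) hrL hqk
    have hidx : (∑ r' ∈ Finset.range r, (n + d - 1 - r') / d) + q + k
        = ((L.take r).map List.length).sum + (q + k) := by rw [hprefix]; omega
    rw [show reorder T n d = L.flatten from rfl, hidx, hflat, hLr]
    have hqk' : q + k < Nat.card {k : ℕ | r + k * d < n} := by
      rw [card_lemma n d r hd]; omega
    rw [downSample, List.getElem?_map, List.getElem?_range hqk']
    simp only [Option.map_some]
    congr 2
    have : (q + k) * d = q * d + k * d := by ring
    omega
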